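/- Let c ∈ ℝ, h : V → ℝ, let A ∈ ℝ be a constant with −c + h_i·e^A > 0 for every i ∈ V (so the constant function A is a strict sub solution), and let ψ : V → ℝ satisfy (Δψ)_i − c + h_i·e^{ψ_i} < 0 for every i ∈ V (a strict super solution) together with A ≤ ψ_i for all i. Then there exists u : V → ℝ with A < u_i < ψ_i for all i ∈ V solving the Kazdan–Warner equation Δu = c − h·e^u. -/

import Mathlib

/-- The graph Laplacian: `(Δ f)_i = (1/μ_i) ∑_{j ∼ i} ω_{ij} (f_j - f_i)`. -/
noncomputable def glap {V : Type*} [Fintype V] (G : SimpleGraph V) [DecidableRel G.Adj]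
    (μ : V → ℝ) (ω : V → V → ℝ) (f : V → ℝ) (i : V) : ℝ :=
  (1 / μ i) * ∑ j ∈ G.neighborFinset i, ω i j * (f j - f i)

open Filter Set Topology Finset in
private lemma kw_slope_right {φ : ℝ → ℝ} {a b d : ℝ} (hφ : HasDerivAt φ d a) (hd : d < 0)
    (hab : a < b) : ∃ t ∈ Set.Ioc a b, φ t < φ a := by
  have hs : Tendsto (slope φ a) (𝓝[≠] a) (𝓝 d) := hasDerivAt_iff_tendsto_slope.1 hφ
  have h1 : ∀ᶠ t in 𝓝[≠] a, slope φ a t < 0 := hs.eventually_lt_const hd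
  have h2 : ∀ᶠ t in 𝓝[>] a, slope φ a t < 0 :=
    h1.filter_mono (nhdsWithin_mono a (fun x hx => ne_of_gt hx))
  have h3 : ∀ᶠ t in 𝓝[>] a, t ∈ Set.Ioc a b :=
    eventually_of_mem (Ioc_mem_nhdsGT_of_mem ⟨le_refl a, hab⟩) (fun x hx => hx)
  obtain ⟨t, ht1, ht2⟩ := (h2.and h3).exists
  refine ⟨t, ht2, ?_⟩
  have hta : 0 < t - a := sub_pos.2 ht2.1
  have h4 : (φ t - φ a) / (t - a) < 0 := by rwa [slope_def_field] at ht1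
  rcases (div_neg_iff).1 h4 with ⟨_, h5⟩ | ⟨h5, _⟩
  · linarith
  · linarith

open Filter Set Topology Finset in
private lemma kw_slope_left {φ : ℝ → ℝ} {a b d : ℝ} (hφ : HasDerivAt φ d a) (hd : 0 < d)
    (hab : b < a) : ∃ t ∈ Set.Ico b a, φ t < φ a := by
  have hs : Tendsto (slope φ a) (𝓝[≠] a) (𝓝 d) := hasDerivAt_iff_tendsto_slope.1 hφ
  have h1 : ∀ᶠ t in 𝓝[≠] a, 0 < slope φ a t := hs.eventually_const_lt hd
  have h2 : ∀ᶠ t in 𝓝[<] a, 0 < slope φ a t :=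
    h1.filter_mono (nhdsWithin_mono a (fun x hx => ne_of_lt hx))
  have h3 : ∀ᶠ t in 𝓝[<] a, t ∈ Set.Ico b a :=
    eventually_of_mem (Ico_mem_nhdsLT_of_mem ⟨hab, le_refl a⟩) (fun x hx => hx)
  obtain ⟨t, ht1, ht2⟩ := (h2.and h3).exists
  refine ⟨t, ht2, ?_⟩
  have hta : t - a < 0 := sub_neg.2 ht2.2
  have h4 : 0 < (φ t - φ a) / (t - a) := by rwa [slope_def_field] at ht1
  rcases (div_pos_iff).1 h4 with ⟨_, h5⟩ | ⟨h5, _⟩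
  · linarith
  · linarith

/-- The variational functional whose critical points solve the Kazdan–Warner equation. -/
noncomputable def Jfun {V : Type*} [Fintype V] (G : SimpleGraph V) [DecidableRel G.Adj]
    (μ : V → ℝ) (ω : V → V → ℝ) (h : V → ℝ) (c : ℝ) (u : V → ℝ) : ℝ :=
  (1/4) * ∑ k, ∑ l ∈ G.neighborFinset k, ω k l * (u l - u k)^2
    + ∑ k, μ k * (c * u k - h k * Real.exp (u k))

private lemma Jfun_cont {V : Type*} [Fintype V] (G : SimpleGraph V) [DecidableRel G.Adj]
    (μ : V → ℝ) (ω : V → V → ℝ) (h : V → ℝ) (c : ℝ) :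
    Continuous (Jfun G μ ω h c) := by
  unfold Jfun
  fun_prop

open Filter Set Topology Finset in
private lemma hasDerivAt_Jfun {V : Type*} [Fintype V] [DecidableEq V] (G : SimpleGraph V)
    [DecidableRel G.Adj] (μ h : V → ℝ) (ω' : V → V → ℝ) (c : ℝ)
    (hsym : ∀ i j, ω' i j = ω' j i) (u : V → ℝ) (i : V) (t : ℝ) :
    HasDerivAt (fun s => Jfun G μ ω' h c (Function.update u i s))
      (-(∑ j ∈ G.neighborFinset i, ω' i j * (Function.update u i t j - t))
        + μ i * (c - h i * Real.exp t)) t := by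
  unfold Jfun
  have base : ∀ j : V, HasDerivAt (fun s : ℝ => Function.update u i s j)
      (if j = i then (1:ℝ) else 0) t := by
    intro j
    by_cases hj : j = i
    · simp [hj, Function.update_apply, hasDerivAt_id']
    · simp [Function.update_apply, hj, hasDerivAt_const]
  set e : V → ℝ := fun j => if j = i then 1 else 0 with he
  set w : V → ℝ := Function.update u i t with hw
  have hq : HasDerivAt (fun s => (1/4) * ∑ k, ∑ l ∈ G.neighborFinset k,
        ω' k l * (Function.update u i s l - Function.update u i s k)^2)
      ((1/4) * ∑ k, ∑ l ∈ G.neighborFinset k,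
        ω' k l * ((2:ℕ) * (w l - w k)^1 * (e l - e k))) t := by
    refine HasDerivAt.const_mul _ (HasDerivAt.fun_sum fun k _ => HasDerivAt.fun_sum fun l _ => ?_)
    exact (((base l).sub (base k)).pow 2).const_mul _
  have hp : HasDerivAt (fun s => ∑ k, μ k *
        (c * Function.update u i s k - h k * Real.exp (Function.update u i s k)))
      (∑ k, μ k * (c * e k - h k * (Real.exp (w k) * e k))) t := by
    refine HasDerivAt.fun_sum fun k _ => ?_
    exact (((base k).const_mul c).sub (((base k).exp).const_mul (h k))).const_mul (μ k)
  have := hq.add hp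
  refine this.congr_deriv ?_
  have hwi : w i = t := Function.update_self i t u
  have part2 : (∑ k, μ k * (c * e k - h k * (Real.exp (w k) * e k)))
      = μ i * (c - h i * Real.exp t) := by
    rw [Finset.sum_eq_single i]
    · simp [he, hwi]
    · intro b _ hb; simp [he, hb]
    · intro hi; exact absurd (Finset.mem_univ i) hi
  have part1 : ((1/4) * ∑ k, ∑ l ∈ G.neighborFinset k,
        ω' k l * ((2:ℕ) * (w l - w k)^1 * (e l - e k)))
      = -(∑ j ∈ G.neighborFinset i, ω' i j * (w j - t)) := by
    have claim : ∀ k : V, (∑ l ∈ G.neighborFinset k,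
        ω' k l * ((2:ℕ) * (w l - w k)^1 * (e l - e k)))
        = if k = i then ∑ l ∈ G.neighborFinset i, (-2) * (ω' i l * (w l - t))
          else (if k ∈ G.neighborFinset i then 2 * (ω' i k * (t - w k)) else 0) := by
      intro k
      by_cases hk : k = i
      · subst hk
        rw [if_pos rfl]
        refine Finset.sum_congr rfl fun l hl => ?_
        have hli : l ≠ k := ((SimpleGraph.mem_neighborFinset _ _ _).1 hl).ne'
        simp only [he, hwi]
        rw [if_neg hli, if_true]
        ring
      · rw [if_neg hk]
        have : ∀ l ∈ G.neighborFinset k,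
            ω' k l * ((2:ℕ) * (w l - w k)^1 * (e l - e k))
            = if l = i then 2 * (ω' i k * (t - w k)) else 0 := by
          intro l _
          by_cases hl : l = i
          · subst hl
            rw [if_pos rfl]
            simp only [he, hwi]
            rw [if_true, if_neg hk, hsym k l]
            ring
          · rw [if_neg hl]
            simp only [he]
            rw [if_neg hl, if_neg hk]
            ring
        rw [Finset.sum_congr rfl this, Finset.sum_ite_eq' (G.neighborFinset k) i
          (fun _ => 2 * (ω' i k * (t - w k)))]
        congr 1
        simp [SimpleGraph.mem_neighborFinset, SimpleGraph.adj_comm]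
    rw [Finset.sum_congr rfl (fun k _ => claim k)]
    rw [← Finset.sum_erase_add _ _ (Finset.mem_univ i), if_pos rfl]
    have h5 : (∑ k ∈ Finset.univ.erase i, (if k = i then
          ∑ l ∈ G.neighborFinset i, (-2) * (ω' i l * (w l - t))
          else (if k ∈ G.neighborFinset i then 2 * (ω' i k * (t - w k)) else 0)))
        = ∑ k ∈ G.neighborFinset i, 2 * (ω' i k * (t - w k)) := by
      rw [Finset.sum_congr rfl (fun k hk => if_neg (Finset.ne_of_mem_erase hk))]
      rw [Finset.sum_ite_mem]
      congr 1
      ext x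
      simp only [Finset.mem_inter, Finset.mem_erase, Finset.mem_univ, and_true,
        SimpleGraph.mem_neighborFinset]
      exact ⟨fun ⟨_, hx⟩ => hx, fun hx => ⟨hx.ne', hx⟩⟩
    rw [h5, ← Finset.sum_add_distrib, Finset.mul_sum, ← Finset.sum_neg_distrib]
    refine Finset.sum_congr rfl fun j _ => ?_
    ring
  rw [part1, part2]

open Filter Set Topology Finset in
/-- Method of sub and super solutions: if the constant `A` is a strict sub solution
(`-c + h_i e^A > 0` for all `i`) and `ψ ≥ A` is a strict super solution
(`(Δψ)_i - c + h_i e^{ψ_i} < 0` for all `i`), then there exists a solution `u` of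
`Δ u = c - h e^u` with `A < u < ψ` pointwise. -/
theorem stmt_11 {V : Type*} [Fintype V] (G : SimpleGraph V) [DecidableRel G.Adj]
    (hconn : G.Connected)
    (μ : V → ℝ) (hμ : ∀ i, 0 < μ i)
    (ω : V → V → ℝ) (hsym : ∀ i j, ω i j = ω j i)
    (hω : ∀ i j, G.Adj i j → 0 < ω i j)
    (h : V → ℝ) (c : ℝ) (A : ℝ)
    (hsub : ∀ i, -c + h i * Real.exp A > 0)
    (ψ : V → ℝ)
    (hsuper : ∀ i, glap G μ ω ψ i - c + h i * Real.exp (ψ i) < 0)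
    (hAψ : ∀ i, A ≤ ψ i) :
    ∃ u : V → ℝ, (∀ i, A < u i ∧ u i < ψ i) ∧
      ∀ i, glap G μ ω u i = c - h i * Real.exp (u i) := by
  classical
  -- strict ordering between the sub and super solutions
  have hAψ' : ∀ i, A < ψ i := by
    intro i
    rcases lt_or_eq_of_le (hAψ i) with h' | h'
    · exact h'
    · exfalso
      have hg : 0 ≤ glap G μ ω ψ i := by
        unfold glap
        apply mul_nonneg (one_div_nonneg.2 (hμ i).le)
        apply Finset.sum_nonneg
        intro j hj
        have hadj := (SimpleGraph.mem_neighborFinset _ _ _).1 hj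
        have h1 := hω i j hadj
        have h2 := hAψ j
        nlinarith
      have h1 := hsuper i
      have h2 := hsub i
      rw [← h'] at h1
      linarith
  -- the compact box
  set S : Set (V → ℝ) := Set.univ.pi (fun i => Set.Icc A (ψ i)) with hSdef
  have hScomp : IsCompact S := isCompact_univ_pi (fun i => isCompact_Icc)
  have hψS : ψ ∈ S := by
    intro i _
    exact ⟨hAψ i, le_refl _⟩
  set J : (V → ℝ) → ℝ := Jfun G μ ω h c with hJdef
  obtain ⟨u, huS, humin⟩ := hScomp.exists_isMinOn ⟨ψ, hψS⟩ (Jfun_cont G μ ω h c).continuousOn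
  have huS' : ∀ i, A ≤ u i ∧ u i ≤ ψ i := fun i => huS i (Set.mem_univ i)
  have hμne : ∀ i, (μ i : ℝ) ≠ 0 := fun i => (hμ i).ne'
  have key : ∀ i, (A < u i ∧ u i < ψ i) ∧ glap G μ ω u i = c - h i * Real.exp (u i) := by
    intro i
    -- derivative of the one-variable slice
    have hd : ∀ x : ℝ, HasDerivAt (fun s => J (Function.update u i s))
        (-(∑ j ∈ G.neighborFinset i, ω i j * (u j - x)) + μ i * (c - h i * Real.exp x)) x := by
      intro x
      have h0 := hasDerivAt_Jfun G μ h ω c hsym u i x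
      have hsum : (∑ j ∈ G.neighborFinset i, ω i j * (Function.update u i x j - x))
          = ∑ j ∈ G.neighborFinset i, ω i j * (u j - x) := by
        refine Finset.sum_congr rfl fun j hj => ?_
        rw [Function.update_of_ne (((SimpleGraph.mem_neighborFinset _ _ _).1 hj).ne') x u]
      rw [hsum] at h0
      exact h0
    have hupd : ∀ x ∈ Set.Icc A (ψ i), Function.update u i x ∈ S := by
      intro x hx j _
      rcases eq_or_ne j i with hj | hj
      · subst hj
        rw [Function.update_self]
        exact hx
      · rw [Function.update_of_ne hj]
        exact huS j (Set.mem_univ j)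
    have hmin' : ∀ x ∈ Set.Icc A (ψ i), J u ≤ J (Function.update u i x) :=
      fun x hx => humin (hupd x hx)
    have hJuu : J (Function.update u i (u i)) = J u := by rw [Function.update_eq_self]
    -- Step 1 : A < u i
    have hA : A < u i := by
      rcases lt_or_eq_of_le (huS' i).1 with h' | h'
      · exact h'
      · exfalso
        have hDneg : (-(∑ j ∈ G.neighborFinset i, ω i j * (u j - u i))
            + μ i * (c - h i * Real.exp (u i))) < 0 := by
          have hsum0 : 0 ≤ ∑ j ∈ G.neighborFinset i, ω i j * (u j - u i) := by
            apply Finset.sum_nonneg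
            intro j hj
            have h1 := hω i j ((SimpleGraph.mem_neighborFinset _ _ _).1 hj)
            have h2 := (huS' j).1
            nlinarith [h'.symm ▸ le_refl (u i)]
          have h3 := hsub i
          have h4 := hμ i
          have h6 : 0 < μ i * (-c + h i * Real.exp A) := mul_pos h4 h3
          rw [← h'] at hsum0 ⊢
          linarith
        obtain ⟨t, htm, hlt⟩ := kw_slope_right (hd (u i)) hDneg (h' ▸ hAψ' i)
        have htI : t ∈ Set.Icc A (ψ i) := ⟨h' ▸ le_of_lt htm.1, htm.2⟩
        have := hmin' t htI
        rw [hJuu] at hlt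
        linarith
    -- Step 2 : u i < ψ i
    have hB : u i < ψ i := by
      rcases lt_or_eq_of_le (huS' i).2 with h' | h'
      · exact h'
      · exfalso
        have hDpos : 0 < (-(∑ j ∈ G.neighborFinset i, ω i j * (u j - u i))
            + μ i * (c - h i * Real.exp (u i))) := by
          have hle : (∑ j ∈ G.neighborFinset i, ω i j * (u j - u i))
              ≤ ∑ j ∈ G.neighborFinset i, ω i j * (ψ j - ψ i) := by
            apply Finset.sum_le_sum
            intro j hj
            have h1 := hω i j ((SimpleGraph.mem_neighborFinset _ _ _).1 hj)
            have h2 := (huS' j).2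
            rw [h']
            nlinarith
          have hglap : (∑ j ∈ G.neighborFinset i, ω i j * (ψ j - ψ i))
              = μ i * glap G μ ω ψ i := by
            unfold glap
            rw [← mul_assoc, mul_one_div, div_self (hμne i), one_mul]
          have h3 := hsuper i
          have h4 := hμ i
          have h5 : μ i * (glap G μ ω ψ i - c + h i * Real.exp (ψ i)) < 0 :=
            mul_neg_of_pos_of_neg h4 h3
          rw [h'] at hle ⊢
          linarith
        obtain ⟨t, htm, hlt⟩ := kw_slope_left (hd (u i)) hDpos (lt_of_lt_of_le hA (le_refl _))
        have htI : t ∈ Set.Icc A (ψ i) := ⟨htm.1, le_of_lt (lt_of_lt_of_le htm.2 (h' ▸ le_refl _))⟩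
        have := hmin' t htI
        rw [hJuu] at hlt
        linarith
    -- Step 3 : the equation holds at i
    refine ⟨⟨hA, hB⟩, ?_⟩
    have hmem : Set.Icc A (ψ i) ∈ nhds (u i) := Icc_mem_nhds hA hB
    have hminOn : IsMinOn (fun s => J (Function.update u i s)) (Set.Icc A (ψ i)) (u i) := by
      intro x hx
      simp only [Set.mem_setOf_eq, hJuu]
      exact hmin' x hx
    have hloc : IsLocalMin (fun s => J (Function.update u i s)) (u i) :=
      hminOn.isLocalMin hmem
    have hzero := hloc.hasDerivAt_eq_zero (hd (u i))
    have hglap : (∑ j ∈ G.neighborFinset i, ω i j * (u j - u i)) = μ i * glap G μ ω u i := by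
      unfold glap
      rw [← mul_assoc, mul_one_div, div_self (hμne i), one_mul]
    rw [hglap] at hzero
    have h6 : μ i * glap G μ ω u i = μ i * (c - h i * Real.exp (u i)) := by linarith
    exact mul_left_cancel₀ (hμne i) h6
  exact ⟨u, fun i => (key i).1, fun i => (key i).2⟩
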